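/- Let 𝔸 and 𝔹 be categories with finite limits, V : 𝔸 → 𝔹 a faithful functor preserving finite limits, and p : V×V×V → V a V-Mal'tsev operation. Let (A, s, t) and (A', s', t') be objects of 𝔸 with endomorphisms satisfying s∘t = t, t∘s = s, s'∘t' = t', t'∘s' = s'. Let τ : A' → A be a morphism with s∘τ∘s' = s∘τ and t∘τ∘t' = t∘τ, and let φ : A' → A be a morphism satisfying V(φ) = p_A⟨V(s∘τ∘t'), V(τ∘t'), V(τ)⟩ (the domain of the 2-cell τ). Then s∘φ = s∘τ, φ∘s' = s∘φ, and t∘φ = φ∘t'; in particular φ is a morphism (A',s',t') → (A,s,t) commuting with the endomorphism pairs. -/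
import Mathlib


open CategoryTheory CategoryTheory.Limits

/-- A `V`-Mal'tsev operation: a natural transformation `p : V×V×V → V` whose
components `p_A : V(A) × V(A) × V(A) ⟶ V(A)` satisfy
`p_A ∘ ⟨x,y,y⟩ = x = p_A ∘ ⟨y,y,x⟩`. -/
structure VMaltsevOperation {𝔸 𝔹 : Type*} [Category 𝔸] [Category 𝔹]
    [HasFiniteLimits 𝔹] (V : 𝔸 ⥤ 𝔹) where
  app : ∀ A : 𝔸, (V.obj A ⨯ V.obj A ⨯ V.obj A) ⟶ V.obj A
  naturality : ∀ {A A' : 𝔸} (f : A ⟶ A'),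
    prod.map (V.map f) (prod.map (V.map f) (V.map f)) ≫ app A' = app A ≫ V.map f
  maltsev_left : ∀ {T : 𝔹} {A : 𝔸} (x y : T ⟶ V.obj A),
    prod.lift x (prod.lift y y) ≫ app A = x
  maltsev_right : ∀ {T : 𝔹} {A : 𝔸} (x y : T ⟶ V.obj A),
    prod.lift y (prod.lift y x) ≫ app A = x

/-- The Mal'tsev operation applied to three generalized elements `x, y, z : T ⟶ V(A)`:
`p_A ∘ ⟨x, y, z⟩`. -/
noncomputable def VMaltsevOperation.papp {𝔸 𝔹 : Type*} [Category 𝔸] [Category 𝔹]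
    [HasFiniteLimits 𝔹] {V : 𝔸 ⥤ 𝔹} (p : VMaltsevOperation V)
    {T : 𝔹} {A : 𝔸} (x y z : T ⟶ V.obj A) : T ⟶ V.obj A :=
  prod.lift x (prod.lift y z) ≫ p.app A

/-- Property (P1) for a triple `(A, s, t)`: for all `α, β, γ : X ⟶ A` with
`s∘α = s∘β` and `t∘β = t∘γ` there is a unique `φ : X ⟶ A` with
`V(φ) = p_A ∘ ⟨V(α), V(β), V(γ)⟩`. -/
def PropertyP1 {𝔸 𝔹 : Type*} [Category 𝔸] [Category 𝔹]
    [HasFiniteLimits 𝔹] {V : 𝔸 ⥤ 𝔹} (p : VMaltsevOperation V)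
    {A : 𝔸} (s t : A ⟶ A) : Prop :=
  ∀ (X : 𝔸) (α β γ : X ⟶ A), α ≫ s = β ≫ s → β ≫ t = γ ≫ t →
    ∃! φ : X ⟶ A, V.map φ = p.papp (V.map α) (V.map β) (V.map γ)

lemma VMaltsevOperation.papp_comp {𝔸 𝔹 : Type*} [Category 𝔸] [Category 𝔹]
    [HasFiniteLimits 𝔹] {V : 𝔸 ⥤ 𝔹} (p : VMaltsevOperation V)
    {T : 𝔹} {A A' : 𝔸} (x y z : T ⟶ V.obj A) (f : A ⟶ A') :
    p.papp x y z ≫ V.map f = p.papp (x ≫ V.map f) (y ≫ V.map f) (z ≫ V.map f) := by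
  rw [VMaltsevOperation.papp, VMaltsevOperation.papp, Category.assoc, ← p.naturality f,
    ← Category.assoc]
  congr 1
  simp

lemma VMaltsevOperation.comp_papp {𝔸 𝔹 : Type*} [Category 𝔸] [Category 𝔹]
    [HasFiniteLimits 𝔹] {V : 𝔸 ⥤ 𝔹} (p : VMaltsevOperation V)
    {T T' : 𝔹} {A : 𝔸} (f : T' ⟶ T) (x y z : T ⟶ V.obj A) :
    f ≫ p.papp x y z = p.papp (f ≫ x) (f ≫ y) (f ≫ z) := by
  rw [VMaltsevOperation.papp, VMaltsevOperation.papp, ← Category.assoc]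
  congr 1
  simp

lemma VMaltsevOperation.papp_left {𝔸 𝔹 : Type*} [Category 𝔸] [Category 𝔹]
    [HasFiniteLimits 𝔹] {V : 𝔸 ⥤ 𝔹} (p : VMaltsevOperation V)
    {T : 𝔹} {A : 𝔸} (x y : T ⟶ V.obj A) : p.papp x y y = x := p.maltsev_left x y

lemma VMaltsevOperation.papp_right {𝔸 𝔹 : Type*} [Category 𝔸] [Category 𝔹]
    [HasFiniteLimits 𝔹] {V : 𝔸 ⥤ 𝔹} (p : VMaltsevOperation V)
    {T : 𝔹} {A : 𝔸} (x y : T ⟶ V.obj A) : p.papp y y x = x := p.maltsev_right x y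

/-- The domain `φ` of a 2-cell `τ`, defined by `V(φ) = p⟨V(s∘τ∘t'), V(τ∘t'), V(τ)⟩`,
satisfies `s∘φ = s∘τ`, `φ∘s' = s∘φ` and `t∘φ = φ∘t'`; in particular it is a morphism
`(A',s',t') → (A,s,t)`. -/
theorem dom_of_twoCell_is_morphism
    {𝔸 𝔹 : Type*} [Category 𝔸] [Category 𝔹]
    [HasFiniteLimits 𝔸] [HasFiniteLimits 𝔹]
    (V : 𝔸 ⥤ 𝔹) [V.Faithful] [PreservesFiniteLimits V]
    (p : VMaltsevOperation V)
    {A A' : 𝔸} (s t : A ⟶ A) (s' t' : A' ⟶ A')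
    (hst : t ≫ s = t) (hts : s ≫ t = s)
    (hst' : t' ≫ s' = t') (hts' : s' ≫ t' = s')
    (τ : A' ⟶ A)
    (hτs : s' ≫ τ ≫ s = τ ≫ s) (hτt : t' ≫ τ ≫ t = τ ≫ t)
    (φ : A' ⟶ A)
    (hφ : V.map φ = p.papp (V.map (t' ≫ τ ≫ s)) (V.map (t' ≫ τ)) (V.map τ)) :
    φ ≫ s = τ ≫ s ∧ s' ≫ φ = φ ≫ s ∧ φ ≫ t = t' ≫ φ := by
  have hss : s ≫ s = s := by
    nth_rewrite 1 [← hts]; rw [Category.assoc, hst, hts]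
  have htt' : t' ≫ t' = t' := by
    nth_rewrite 1 [← hst']; rw [Category.assoc, hts', hst']
  have h1 : φ ≫ s = τ ≫ s := by
    apply V.map_injective
    rw [V.map_comp, hφ, p.papp_comp]
    simp only [← V.map_comp, Category.assoc, hss]
    exact p.papp_right _ _
  refine ⟨h1, ?_, ?_⟩
  · apply V.map_injective
    rw [V.map_comp, hφ, p.comp_papp, h1]
    simp only [← V.map_comp, ← Category.assoc, hts']
    simp only [Category.assoc, hτs]
    exact p.papp_left _ _
  · apply V.map_injective
    rw [V.map_comp, V.map_comp, hφ, p.papp_comp, p.comp_papp]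
    simp only [← V.map_comp, ← Category.assoc, htt']
    simp only [Category.assoc, hts, hτt]
    rw [p.papp_left, p.papp_left]
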